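/- The class of graphs admitting an L-embedding (with the intersection characterization: for vertices u,v with corners (u.x,u.y),(v.x,v.y), arms rightward of length w and upward of length h, u and v adjacent iff their L-shapes cross) is closed under adding a pendant vertex: if G has an L-embedding and G' is obtained from G by adding a new vertex adjacent to exactly one existing vertex, then G' has an L-embedding. -/

import Mathlib

/-- The `L`-shape with corner `(X, Y)`, horizontal arm of length `W` extending
rightward and vertical arm of length `H` extending upward (with the `y`-coordinate
increasing downward, so the vertical arm goes from `(X, Y)` to `(X, Y - H)`). -/
def LShape (X Y W H : ℝ) : Set (ℝ × ℝ) :=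
  {p | (p.2 = Y ∧ X ≤ p.1 ∧ p.1 ≤ X + W) ∨ (p.1 = X ∧ Y - H ≤ p.2 ∧ p.2 ≤ Y)}

/-- A graph admits an `L`-embedding if each vertex can be assigned an `L`-shape so
that two distinct vertices are adjacent iff their `L`-shapes intersect. -/
def HasLEmbedding {V : Type*} (G : SimpleGraph V) : Prop :=
  ∃ X Y W H : V → ℝ, (∀ v, 0 < W v) ∧ (∀ v, 0 < H v) ∧
    ∀ u v : V, u ≠ v →
      (G.Adj u v ↔
        (LShape (X u) (Y u) (W u) (H u) ∩ LShape (X v) (Y v) (W v) (H v)).Nonempty)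

noncomputable def stepFn (s x : ℝ) : ℝ := if x ≤ s then x else x + 1

lemma stepFn_strictMono (s : ℝ) : StrictMono (stepFn s) := by
  intro x y hxy
  unfold stepFn
  split_ifs with h1 h2 h2 <;> (try push_neg at *) <;> linarith

lemma stepFn_le_iff {s x y : ℝ} : stepFn s x ≤ stepFn s y ↔ x ≤ y :=
  (stepFn_strictMono s).le_iff_le

lemma stepFn_eq_iff {s x y : ℝ} : stepFn s x = stepFn s y ↔ x = y :=
  (stepFn_strictMono s).injective.eq_iff

lemma stepFn_of_le {s x : ℝ} (h : x ≤ s) : stepFn s x = x := if_pos h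

lemma stepFn_of_gt {s x : ℝ} (h : s < x) : stepFn s x = x + 1 := if_neg (not_le.2 h)

lemma stepFn_gap (s x : ℝ) : stepFn s x ≤ s ∨ s + 1 ≤ stepFn s x := by
  unfold stepFn
  split_ifs with h
  · exact Or.inl h
  · push_neg at h; right; linarith

lemma stepFn_le_base_iff {s x : ℝ} : stepFn s x ≤ s ↔ x ≤ s := by
  unfold stepFn
  split_ifs with h
  · exact Iff.rfl
  · push_neg at h; constructor <;> intro <;> linarith

lemma stepFn_base_lt_iff {s x : ℝ} : s < stepFn s x ↔ s < x := by
  unfold stepFn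
  split_ifs with h
  · exact Iff.rfl
  · push_neg at h; constructor <;> intro <;> linarith

noncomputable def qq (x : ℝ) : ℝ := Real.arctan x / Real.pi + 1/2

lemma qq_pos (x : ℝ) : 0 < qq x := by
  unfold qq
  have h1 := Real.neg_pi_div_two_lt_arctan x
  have hπ := Real.pi_pos
  have h2 : -(1/2 : ℝ) < Real.arctan x / Real.pi := by
    rw [lt_div_iff₀ hπ]; nlinarith
  linarith

lemma qq_lt_one (x : ℝ) : qq x < 1 := by
  unfold qq
  have h1 := Real.arctan_lt_pi_div_two x
  have hπ := Real.pi_pos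
  have h2 : Real.arctan x / Real.pi < 1/2 := by
    rw [div_lt_iff₀ hπ]; nlinarith
  linarith

lemma qq_mono {x y : ℝ} (h : x < y) : qq x < qq y := by
  unfold qq
  have hπ := Real.pi_pos
  have := Real.arctan_strictMono h
  have h2 : Real.arctan x / Real.pi < Real.arctan y / Real.pi := by
    apply div_lt_div_of_pos_right this hπ
  linarith

open Classical in
noncomputable def pdel {V : Type*} (u₀ : V) (X : V → ℝ) (v : V) : ℝ :=
  if v = u₀ then 1/5
  else if X v < X u₀ then qq (X v) / 20
  else if X v = X u₀ then 1/10
  else 11/40 + qq (X v) / 40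

lemma pdel_pos {V : Type*} (u₀ : V) (X : V → ℝ) (v : V) : 0 < pdel u₀ X v := by
  unfold pdel
  split_ifs <;> linarith [qq_pos (X v), qq_lt_one (X v)]

lemma pdel_le {V : Type*} (u₀ : V) (X : V → ℝ) (v : V) : pdel u₀ X v ≤ 3/10 := by
  unfold pdel
  split_ifs <;> linarith [qq_pos (X v), qq_lt_one (X v)]

lemma pdel_mono {V : Type*} (u₀ : V) (X : V → ℝ) {v w : V} (h : X v < X w) :
    pdel u₀ X v ≤ pdel u₀ X w := by
  have q1 := qq_pos (X v); have q2 := qq_lt_one (X v)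
  have q3 := qq_pos (X w); have q4 := qq_lt_one (X w)
  have q5 : qq (X v) ≤ qq (X w) := le_of_lt (qq_mono h)
  unfold pdel
  by_cases hv : v = u₀
  · rw [if_pos hv]
    have hXv : X v = X u₀ := by rw [hv]
    by_cases hw : w = u₀
    · rw [if_pos hw]
    · rw [if_neg hw]
      have hXw : X u₀ < X w := by linarith
      rw [if_neg (by linarith), if_neg (by linarith)]
      linarith
  · rw [if_neg hv]
    by_cases hw : w = u₀
    · rw [if_pos hw]
      have hXw : X w = X u₀ := by rw [hw]
      rw [if_pos (by linarith)]
      linarith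
    · rw [if_neg hw]
      split_ifs <;> push_neg at * <;> linarith

lemma pdel_private {V : Type*} (u₀ : V) (X : V → ℝ) (v : V)
    (h1 : 1/5 ≤ pdel u₀ X v) (h2 : pdel u₀ X v ≤ 6/25) : v = u₀ := by
  unfold pdel at h1 h2
  split_ifs at h1 h2 with h3 h4 h5
  · exact h3
  · exfalso; linarith [qq_lt_one (X v)]
  · exfalso; linarith
  · exfalso; linarith [qq_pos (X v)]

noncomputable def nA {V : Type*} (u₀ : V) (X W : V → ℝ) (v : V) : ℝ :=
  stepFn (X u₀ + W u₀) (X v)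

open Classical in
noncomputable def nB {V : Type*} (u₀ : V) (X W : V → ℝ) (v : V) : ℝ :=
  if v = u₀ then X u₀ + W u₀ + 1/2 else stepFn (X u₀ + W u₀) (X v + W v)

noncomputable def nC {V : Type*} (u₀ : V) (Y H : V → ℝ) (v : V) : ℝ :=
  stepFn (Y u₀) (Y v - H v)

open Classical in
noncomputable def nD {V : Type*} (u₀ : V) (X Y : V → ℝ) (v : V) : ℝ :=
  if Y v = Y u₀ then Y u₀ + pdel u₀ X v else stepFn (Y u₀) (Y v)

def XCond (a₁ b₁ c₁ d₁ a₂ b₂ c₂ d₂ : ℝ) : Prop :=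
  (d₁ = d₂ ∧ a₂ ≤ b₁ ∧ a₁ ≤ b₂) ∨ (a₁ = a₂ ∧ c₂ ≤ d₁ ∧ c₁ ≤ d₂) ∨
    (a₁ ≤ a₂ ∧ a₂ ≤ b₁ ∧ c₂ ≤ d₁ ∧ d₁ ≤ d₂) ∨
    (a₂ ≤ a₁ ∧ a₁ ≤ b₂ ∧ c₁ ≤ d₂ ∧ d₂ ≤ d₁)

lemma xcond_symm {a₁ b₁ c₁ d₁ a₂ b₂ c₂ d₂ : ℝ} :
    XCond a₁ b₁ c₁ d₁ a₂ b₂ c₂ d₂ ↔ XCond a₂ b₂ c₂ d₂ a₁ b₁ c₁ d₁ := by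
  unfold XCond
  constructor <;>
    rintro (⟨e, h1, h2⟩ | ⟨e, h1, h2⟩ | ⟨h1, h2, h3, h4⟩ | ⟨h1, h2, h3, h4⟩)
  · exact Or.inl ⟨e.symm, h2, h1⟩
  · exact Or.inr (Or.inl ⟨e.symm, h2, h1⟩)
  · exact Or.inr (Or.inr (Or.inr ⟨h1, h2, h3, h4⟩))
  · exact Or.inr (Or.inr (Or.inl ⟨h1, h2, h3, h4⟩))
  · exact Or.inl ⟨e.symm, h2, h1⟩
  · exact Or.inr (Or.inl ⟨e.symm, h2, h1⟩)
  · exact Or.inr (Or.inr (Or.inr ⟨h1, h2, h3, h4⟩))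
  · exact Or.inr (Or.inr (Or.inl ⟨h1, h2, h3, h4⟩))

lemma lshape_inter_iff (a₁ b₁ c₁ d₁ a₂ b₂ c₂ d₂ : ℝ)
    (hab₁ : a₁ ≤ b₁) (hab₂ : a₂ ≤ b₂) (hcd₁ : c₁ ≤ d₁) (hcd₂ : c₂ ≤ d₂) :
    (LShape a₁ d₁ (b₁ - a₁) (d₁ - c₁) ∩ LShape a₂ d₂ (b₂ - a₂) (d₂ - c₂)).Nonempty ↔
      XCond a₁ b₁ c₁ d₁ a₂ b₂ c₂ d₂ := by
  unfold XCond
  constructor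
  · rintro ⟨⟨px, py⟩, hp₁, hp₂⟩
    simp only [LShape, Set.mem_setOf_eq] at hp₁ hp₂
    rcases hp₁ with ⟨e1, e2, e3⟩ | ⟨e1, e2, e3⟩ <;>
      rcases hp₂ with ⟨f1, f2, f3⟩ | ⟨f1, f2, f3⟩
    · exact Or.inl ⟨by linarith, by linarith, by linarith⟩
    · exact Or.inr (Or.inr (Or.inl ⟨by linarith, by linarith, by linarith, by linarith⟩))
    · exact Or.inr (Or.inr (Or.inr ⟨by linarith, by linarith, by linarith, by linarith⟩))
    · exact Or.inr (Or.inl ⟨by linarith, by linarith, by linarith⟩)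
  · rintro (⟨e, h1, h2⟩ | ⟨e, h1, h2⟩ | ⟨h1, h2, h3, h4⟩ | ⟨h1, h2, h3, h4⟩)
    · refine ⟨⟨max a₁ a₂, d₁⟩, ?_, ?_⟩ <;> simp only [LShape, Set.mem_setOf_eq]
      · left
        refine ⟨trivial, le_max_left _ _, ?_⟩
        simp only [max_le_iff]; constructor <;> linarith
      · left
        refine ⟨e, le_max_right _ _, ?_⟩
        simp only [max_le_iff]; constructor <;> linarith
    · refine ⟨⟨a₁, min d₁ d₂⟩, ?_, ?_⟩ <;> simp only [LShape, Set.mem_setOf_eq]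
      · right
        refine ⟨trivial, ?_, min_le_left _ _⟩
        simp only [le_min_iff]; constructor <;> linarith
      · right
        refine ⟨e, ?_, min_le_right _ _⟩
        simp only [le_min_iff]; constructor <;> linarith
    · refine ⟨⟨a₂, d₁⟩, ?_, ?_⟩ <;> simp only [LShape, Set.mem_setOf_eq]
      · left; exact ⟨trivial, h1, by linarith⟩
      · right; exact ⟨trivial, by linarith, h4⟩
    · refine ⟨⟨a₁, d₂⟩, ?_, ?_⟩ <;> simp only [LShape, Set.mem_setOf_eq]
      · right; exact ⟨trivial, by linarith, h4⟩
      · left; exact ⟨trivial, h1, by linarith⟩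

lemma key_pres {V : Type*} (u₀ : V) (X Y W H : V → ℝ)
    (hW : ∀ v, 0 < W v) (hH : ∀ v, 0 < H v) (u v : V) :
    XCond (X u) (X u + W u) (Y u - H u) (Y u) (X v) (X v + W v) (Y v - H v) (Y v) ↔
      XCond (nA u₀ X W u) (nB u₀ X W u) (nC u₀ Y H u) (nD u₀ X Y u)
        (nA u₀ X W v) (nB u₀ X W v) (nC u₀ Y H v) (nD u₀ X Y v) := by
  have hAA : ∀ a b : V, nA u₀ X W a ≤ nA u₀ X W b ↔ X a ≤ X b := by
    intro a b; exact stepFn_le_iff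
  have hAeq : ∀ a b : V, nA u₀ X W a = nA u₀ X W b ↔ X a = X b := by
    intro a b; exact stepFn_eq_iff
  have hBB : ∀ a b : V, nA u₀ X W b ≤ nB u₀ X W a ↔ X b ≤ X a + W a := by
    intro a b
    unfold nA nB
    by_cases ha : a = u₀
    · subst ha
      rw [if_pos rfl]
      constructor
      · intro h
        rcases stepFn_gap (X a + W a) (X b) with h' | h'
        · exact stepFn_le_base_iff.1 h'
        · linarith
      · intro h
        have h2 : stepFn (X a + W a) (X b) ≤ X a + W a := stepFn_le_base_iff.2 h
        linarith
    · rw [if_neg ha]; exact stepFn_le_iff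
  have hCDiff : ∀ a b : V, nC u₀ Y H b ≤ nD u₀ X Y a ↔ Y b - H b ≤ Y a := by
    intro a b
    unfold nC nD
    have hp1 := pdel_pos u₀ X a
    have hp2 := pdel_le u₀ X a
    by_cases ha : Y a = Y u₀
    · rw [if_pos ha]
      constructor
      · intro h
        rcases stepFn_gap (Y u₀) (Y b - H b) with h' | h'
        · have := stepFn_le_base_iff.1 h'
          linarith
        · linarith
      · intro h
        have hb : Y b - H b ≤ Y u₀ := by linarith
        rw [stepFn_of_le hb]
        linarith
    · rw [if_neg ha]; exact stepFn_le_iff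
  unfold XCond
  constructor
  · rintro (⟨e, h1, h2⟩ | ⟨e, h1, h2⟩ | ⟨h1, h2, h3, h4⟩ | ⟨h1, h2, h3, h4⟩)
    · -- HH
      by_cases hu : Y u = Y u₀
      · have hv : Y v = Y u₀ := e.symm.trans hu
        rcases lt_trichotomy (X u) (X v) with hx | hx | hx
        · refine Or.inr (Or.inr (Or.inl ⟨(hAA u v).2 hx.le, (hBB u v).2 h1,
            (hCDiff u v).2 (by linarith [hH v]), ?_⟩))
          unfold nD
          rw [if_pos hu, if_pos hv]
          linarith [pdel_mono u₀ X hx]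
        · exact Or.inr (Or.inl ⟨(hAeq u v).2 hx, (hCDiff u v).2 (by linarith [hH v]),
            (hCDiff v u).2 (by linarith [hH u])⟩)
        · refine Or.inr (Or.inr (Or.inr ⟨(hAA v u).2 hx.le, (hBB v u).2 h2,
            (hCDiff v u).2 (by linarith [hH u]), ?_⟩))
          unfold nD
          rw [if_pos hu, if_pos hv]
          linarith [pdel_mono u₀ X hx]
      · have hv : Y v ≠ Y u₀ := fun hh => hu (e.trans hh)
        refine Or.inl ⟨?_, (hBB u v).2 h1, (hBB v u).2 h2⟩
        unfold nD
        rw [if_neg hu, if_neg hv, e]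
    · -- VV
      exact Or.inr (Or.inl ⟨(hAeq u v).2 e, (hCDiff u v).2 h1, (hCDiff v u).2 h2⟩)
    · -- HV
      rcases eq_or_lt_of_le h1 with hx | hx
      · exact Or.inr (Or.inl ⟨(hAeq u v).2 hx, (hCDiff u v).2 h3,
          (hCDiff v u).2 (by linarith [hH u])⟩)
      · refine Or.inr (Or.inr (Or.inl ⟨(hAA u v).2 h1, (hBB u v).2 h2,
          (hCDiff u v).2 h3, ?_⟩))
        unfold nD
        by_cases hu : Y u = Y u₀ <;> by_cases hv : Y v = Y u₀
        · rw [if_pos hu, if_pos hv]; linarith [pdel_mono u₀ X hx]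
        · rw [if_pos hu, if_neg hv]
          have hYv : Y u₀ < Y v := lt_of_le_of_ne (hu ▸ h4) (fun hh => hv hh.symm)
          rw [stepFn_of_gt hYv]
          linarith [pdel_le u₀ X u]
        · rw [if_neg hu, if_pos hv]
          have hYu : Y u ≤ Y u₀ := hv ▸ h4
          rw [stepFn_of_le hYu]
          linarith [pdel_pos u₀ X v]
        · rw [if_neg hu, if_neg hv]; exact stepFn_le_iff.2 h4
    · -- VH
      rcases eq_or_lt_of_le h1 with hx | hx
      · exact Or.inr (Or.inl ⟨(hAeq u v).2 hx.symm, (hCDiff u v).2 (by linarith [hH v]),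
          (hCDiff v u).2 h3⟩)
      · refine Or.inr (Or.inr (Or.inr ⟨(hAA v u).2 h1, (hBB v u).2 h2,
          (hCDiff v u).2 h3, ?_⟩))
        unfold nD
        by_cases hu : Y u = Y u₀ <;> by_cases hv : Y v = Y u₀
        · rw [if_pos hu, if_pos hv]; linarith [pdel_mono u₀ X hx]
        · rw [if_pos hu, if_neg hv]
          have hYv : Y v ≤ Y u₀ := hu ▸ h4
          rw [stepFn_of_le hYv]
          linarith [pdel_pos u₀ X u]
        · rw [if_neg hu, if_pos hv]
          have hYu : Y u₀ < Y u := lt_of_le_of_ne (hv ▸ h4) (fun hh => hu hh.symm)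
          rw [stepFn_of_gt hYu]
          linarith [pdel_le u₀ X v]
        · rw [if_neg hu, if_neg hv]; exact stepFn_le_iff.2 h4
  · rintro (⟨e, h1, h2⟩ | ⟨e, h1, h2⟩ | ⟨h1, h2, h3, h4⟩ | ⟨h1, h2, h3, h4⟩)
    · -- HH'
      have eY : Y u = Y v := by
        unfold nD at e
        by_cases hu : Y u = Y u₀ <;> by_cases hv : Y v = Y u₀
        · exact hu.trans hv.symm
        · rw [if_pos hu, if_neg hv] at e
          exfalso
          rcases stepFn_gap (Y u₀) (Y v) with h' | h' <;>
            · rw [← e] at h'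
              first
                | linarith [pdel_pos u₀ X u]
                | linarith [pdel_le u₀ X u]
        · rw [if_neg hu, if_pos hv] at e
          exfalso
          rcases stepFn_gap (Y u₀) (Y u) with h' | h' <;>
            · rw [e] at h'
              first
                | linarith [pdel_pos u₀ X v]
                | linarith [pdel_le u₀ X v]
        · rw [if_neg hu, if_neg hv] at e
          exact stepFn_eq_iff.1 e
      exact Or.inl ⟨eY, (hBB u v).1 h1, (hBB v u).1 h2⟩
    · -- VV'
      exact Or.inr (Or.inl ⟨(hAeq u v).1 e, (hCDiff u v).1 h1, (hCDiff v u).1 h2⟩)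
    · -- HV'
      have hx1 : X u ≤ X v := (hAA u v).1 h1
      have hx2 : X v ≤ X u + W u := (hBB u v).1 h2
      have hy3 : Y v - H v ≤ Y u := (hCDiff u v).1 h3
      unfold nD at h4
      by_cases hu : Y u = Y u₀ <;> by_cases hv : Y v = Y u₀
      · exact Or.inl ⟨hu.trans hv.symm, hx2, by linarith [hW v]⟩
      · rw [if_pos hu, if_neg hv] at h4
        have hYv : Y u₀ < Y v := by
          refine stepFn_base_lt_iff.1 ?_
          linarith [pdel_pos u₀ X u]
        exact Or.inr (Or.inr (Or.inl ⟨hx1, hx2, hy3, by linarith⟩))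
      · rw [if_neg hu, if_pos hv] at h4
        have hYu : Y u ≤ Y u₀ := by
          refine stepFn_le_base_iff.1 ?_
          rcases stepFn_gap (Y u₀) (Y u) with h' | h'
          · exact h'
          · exfalso; linarith [pdel_le u₀ X v]
        exact Or.inr (Or.inr (Or.inl ⟨hx1, hx2, hy3, by linarith⟩))
      · rw [if_neg hu, if_neg hv] at h4
        exact Or.inr (Or.inr (Or.inl ⟨hx1, hx2, hy3, stepFn_le_iff.1 h4⟩))
    · -- VH'
      have hx1 : X v ≤ X u := (hAA v u).1 h1
      have hx2 : X u ≤ X v + W v := (hBB v u).1 h2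
      have hy3 : Y u - H u ≤ Y v := (hCDiff v u).1 h3
      unfold nD at h4
      by_cases hu : Y u = Y u₀ <;> by_cases hv : Y v = Y u₀
      · exact Or.inl ⟨hu.trans hv.symm, by linarith [hW u], hx2⟩
      · rw [if_pos hu, if_neg hv] at h4
        have hYv : Y v ≤ Y u₀ := by
          refine stepFn_le_base_iff.1 ?_
          rcases stepFn_gap (Y u₀) (Y v) with h' | h'
          · exact h'
          · exfalso; linarith [pdel_le u₀ X u]
        exact Or.inr (Or.inr (Or.inr ⟨hx1, hx2, hy3, by linarith⟩))
      · rw [if_neg hu, if_pos hv] at h4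
        have hYu : Y u₀ < Y u := by
          refine stepFn_base_lt_iff.1 ?_
          linarith [pdel_pos u₀ X v]
        exact Or.inr (Or.inr (Or.inr ⟨hx1, hx2, hy3, by linarith⟩))
      · rw [if_neg hu, if_neg hv] at h4
        exact Or.inr (Or.inr (Or.inr ⟨hx1, hx2, hy3, stepFn_le_iff.1 h4⟩))

lemma nA_lt_nB {V : Type*} (u₀ : V) (X W : V → ℝ) (hW : ∀ v, 0 < W v) (v : V) :
    nA u₀ X W v < nB u₀ X W v := by
  unfold nA nB
  by_cases hv : v = u₀
  · subst hv
    rw [if_pos rfl, stepFn_of_le (by linarith [hW v])]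
    linarith [hW v]
  · rw [if_neg hv]
    exact (stepFn_strictMono _) (by linarith [hW v])

lemma nC_lt_nD {V : Type*} (u₀ : V) (X Y H : V → ℝ) (hH : ∀ v, 0 < H v) (v : V) :
    nC u₀ Y H v < nD u₀ X Y v := by
  unfold nC nD
  by_cases hv : Y v = Y u₀
  · rw [if_pos hv, stepFn_of_le (by linarith [hH v])]
    linarith [hH v, pdel_pos u₀ X v]
  · rw [if_neg hv]
    exact (stepFn_strictMono _) (by linarith [hH v])

lemma key_pend {V : Type*} (u₀ : V) (X Y W H : V → ℝ)
    (hW : ∀ v, 0 < W v) (hH : ∀ v, 0 < H v) (v : V) :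
    XCond (nA u₀ X W v) (nB u₀ X W v) (nC u₀ Y H v) (nD u₀ X Y v)
      (X u₀ + W u₀ + 1/4) (X u₀ + W u₀ + 7/20) (Y u₀ + 1/5) (Y u₀ + 6/25) ↔
      v = u₀ := by
  unfold XCond
  constructor
  · rintro (⟨e, h1, h2⟩ | ⟨e, h1, h2⟩ | ⟨h1, h2, h3, h4⟩ | ⟨h1, h2, h3, h4⟩)
    · -- HH
      unfold nD at e
      by_cases hv : Y v = Y u₀
      · rw [if_pos hv] at e
        exact pdel_private u₀ X v (by linarith) (by linarith)
      · rw [if_neg hv] at e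
        exfalso
        rcases stepFn_gap (Y u₀) (Y v) with h' | h' <;> rw [e] at h' <;> linarith
    · -- VV
      exfalso
      unfold nA at e
      rcases stepFn_gap (X u₀ + W u₀) (X v) with h' | h' <;> rw [e] at h' <;> linarith
    · -- HV
      unfold nD at h3 h4
      by_cases hv : Y v = Y u₀
      · rw [if_pos hv] at h3 h4
        exact pdel_private u₀ X v (by linarith) (by linarith)
      · rw [if_neg hv] at h3 h4
        exfalso
        rcases stepFn_gap (Y u₀) (Y v) with h' | h' <;> linarith
    · -- VH
      exfalso
      unfold nA at h1 h2
      rcases stepFn_gap (X u₀ + W u₀) (X v) with h' | h' <;> linarith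
  · rintro rfl
    refine Or.inr (Or.inr (Or.inl ⟨?_, ?_, ?_, ?_⟩))
    · unfold nA
      rw [stepFn_of_le (by linarith [hW v])]
      linarith [hW v]
    · unfold nB
      rw [if_pos rfl]
      linarith
    · unfold nD pdel
      rw [if_pos rfl, if_pos rfl]
    · unfold nD pdel
      rw [if_pos rfl, if_pos rfl]
      linarith

noncomputable def pA {V : Type*} (u₀ : V) (X W : V → ℝ) : Option V → ℝ
  | none => X u₀ + W u₀ + 1/4
  | some a => nA u₀ X W a

noncomputable def pB {V : Type*} (u₀ : V) (X W : V → ℝ) : Option V → ℝ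
  | none => X u₀ + W u₀ + 7/20
  | some a => nB u₀ X W a

noncomputable def pC {V : Type*} (u₀ : V) (Y H : V → ℝ) : Option V → ℝ
  | none => Y u₀ + 1/5
  | some a => nC u₀ Y H a

noncomputable def pD {V : Type*} (u₀ : V) (X Y : V → ℝ) : Option V → ℝ
  | none => Y u₀ + 6/25
  | some a => nD u₀ X Y a

/-- The class of `L`-graphs is closed under adding a pendant vertex: if `G` has
an `L`-embedding and `G'` is obtained from `G` by adding a new vertex adjacent
to exactly one existing vertex `u₀`, then `G'` has an `L`-embedding. -/
theorem hasLEmbedding_addPendant {V : Type*} (G : SimpleGraph V)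
    (hG : HasLEmbedding G) (u₀ : V) (G' : SimpleGraph (Option V))
    (hsame : ∀ a b : V, G'.Adj (some a) (some b) ↔ G.Adj a b)
    (hpend : ∀ a : V, G'.Adj (some a) none ↔ a = u₀) :
    HasLEmbedding G' := by
  obtain ⟨X, Y, W, H, hW, hH, hadj⟩ := hG
  have hABp : ∀ o : Option V, pA u₀ X W o ≤ pB u₀ X W o := by
    intro o
    cases o with
    | none => simp only [pA, pB]; linarith
    | some a => exact (nA_lt_nB u₀ X W hW a).le
  have hCDp : ∀ o : Option V, pC u₀ Y H o ≤ pD u₀ X Y o := by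
    intro o
    cases o with
    | none => simp only [pC, pD]; linarith
    | some a => exact (nC_lt_nD u₀ X Y H hH a).le
  refine ⟨pA u₀ X W, pD u₀ X Y, fun o => pB u₀ X W o - pA u₀ X W o,
    fun o => pD u₀ X Y o - pC u₀ Y H o, ?_, ?_, ?_⟩
  · intro o
    cases o with
    | none => simp only [pA, pB]; norm_num
    | some a => exact sub_pos.2 (nA_lt_nB u₀ X W hW a)
  · intro o
    cases o with
    | none => simp only [pC, pD]; norm_num
    | some a => exact sub_pos.2 (nC_lt_nD u₀ X Y H hH a)
  · intro u v huv
    have hmain : (LShape (pA u₀ X W u) (pD u₀ X Y u) (pB u₀ X W u - pA u₀ X W u)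
        (pD u₀ X Y u - pC u₀ Y H u) ∩
        LShape (pA u₀ X W v) (pD u₀ X Y v) (pB u₀ X W v - pA u₀ X W v)
        (pD u₀ X Y v - pC u₀ Y H v)).Nonempty ↔
        XCond (pA u₀ X W u) (pB u₀ X W u) (pC u₀ Y H u) (pD u₀ X Y u)
          (pA u₀ X W v) (pB u₀ X W v) (pC u₀ Y H v) (pD u₀ X Y v) :=
      lshape_inter_iff _ _ _ _ _ _ _ _ (hABp u) (hABp v) (hCDp u) (hCDp v)
    rw [hmain]
    match u, v with
    | none, none => exact absurd rfl huv
    | some a, none =>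
      simp only [pA, pB, pC, pD]
      exact (hpend a).trans (key_pend u₀ X Y W H hW hH a).symm
    | none, some a =>
      rw [G'.adj_comm, xcond_symm]
      simp only [pA, pB, pC, pD]
      exact (hpend a).trans (key_pend u₀ X Y W H hW hH a).symm
    | some a, some b =>
      have hab : a ≠ b := by
        intro h; exact huv (by rw [h])
      have horig : (LShape (X a) (Y a) (W a) (H a) ∩
          LShape (X b) (Y b) (W b) (H b)).Nonempty ↔
          XCond (X a) (X a + W a) (Y a - H a) (Y a) (X b) (X b + W b) (Y b - H b) (Y b) := by
        have h0 := lshape_inter_iff (X a) (X a + W a) (Y a - H a) (Y a)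
          (X b) (X b + W b) (Y b - H b) (Y b)
          (by linarith [hW a]) (by linarith [hW b]) (by linarith [hH a]) (by linarith [hH b])
        rw [show X a + W a - X a = W a from by ring, show Y a - (Y a - H a) = H a from by ring,
          show X b + W b - X b = W b from by ring,
          show Y b - (Y b - H b) = H b from by ring] at h0
        exact h0
      simp only [pA, pB, pC, pD]
      exact ((hsame a b).trans ((hadj a b hab).trans horig)).trans
        (key_pres u₀ X Y W H hW hH a b)
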